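/- The function g(x) = x·ln x / f(x), where f(x) = 1 + (ln(x²−1) − ln x)/(ln(x−1) − ln(x−2)), is decreasing on the real interval [4, ∞) and tends to 1 as x tends to infinity. -/

import Mathlib

namespace PaperStmt

/-- `f x = 1 + (ln(x² − 1) − ln x) / (ln(x − 1) − ln(x − 2))`. -/
noncomputable def f (x : ℝ) : ℝ :=
  1 + (Real.log (x ^ 2 - 1) - Real.log x) / (Real.log (x - 1) - Real.log (x - 2))




lemma R1 {x : ℝ} (hx : 4 ≤ x) :
    0 ≤ x/((x-1)*(x-2)) - (2/(2*x-3) + 2/(3*(2*x-3)^3) + 1/((2*x-3)^3*(x-2))) := by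
  have h1 : (0:ℝ) < x - 1 := by linarith
  have h2 : (0:ℝ) < x - 2 := by linarith
  have h3 : (0:ℝ) < 2*x - 3 := by linarith
  have hy : (0:ℝ) ≤ x - 4 := by linarith
  have hd : (0:ℝ) < 3*(2*x-3)^3*(x-2)^2*(x-1) :=
    mul_pos (mul_pos (mul_pos (by norm_num) (pow_pos h3 3)) (pow_pos h2 2)) h1
  have h3' : (x*2-3:ℝ) ≠ 0 := (by linarith : (0:ℝ) < x*2-3).ne'
  have key : x/((x-1)*(x-2)) - (2/(2*x-3) + 2/(3*(2*x-3)^3) + 1/((2*x-3)^3*(x-2)))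
      = (1158 + 1963*(x-4) + 1240*(x-4)^2 + 346*(x-4)^3 + 36*(x-4)^4)
        / (3*(2*x-3)^3*(x-2)^2*(x-1)) := by
    field_simp
    ring
  rw [key]
  apply div_nonneg _ hd.le
  nlinarith [pow_nonneg hy 2, pow_nonneg hy 3, pow_nonneg hy 4]

lemma R2 {x : ℝ} (hx : 4 ≤ x) : 0 ≤ x/((x-1)*(x-2)) - 2/(2*x-3) := by
  have h1 : (0:ℝ) < x - 1 := by linarith
  have h2 : (0:ℝ) < x - 2 := by linarith
  have h3 : (0:ℝ) < 2*x - 3 := by linarith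
  have hy : (0:ℝ) ≤ x - 4 := by linarith
  have hd : (0:ℝ) < (2*x-3)*(x-2)*(x-1) := mul_pos (mul_pos h3 h2) h1
  have h3' : (x*2-3:ℝ) ≠ 0 := (by linarith : (0:ℝ) < x*2-3).ne'
  have key : x/((x-1)*(x-2)) - 2/(2*x-3)
      = (8 + 3*(x-4)) / ((2*x-3)*(x-2)*(x-1)) := by
    field_simp
    ring
  rw [key]
  apply div_nonneg _ hd.le
  nlinarith

lemma R3 {x : ℝ} (hx : 4 ≤ x) :
    0 ≤ 2*(69/50)*(x/((x-1)*(x-2)) - (2/(2*x-3) + 2/(3*(2*x-3)^3) + 1/((2*x-3)^3*(x-2))))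
      + ((2/(2*x-3))*((x^2+1)/(x^2-1) - 1)
        - (2/(2*x-3) + 2/(3*(2*x-3)^3) + 1/((2*x-3)^3*(x-2)))^2
        - (1/(x^2-1))*(x/((x-1)*(x-2)) - 2/(2*x-3))) := by
  have h1 : (0:ℝ) < x - 1 := by linarith
  have h2 : (0:ℝ) < x - 2 := by linarith
  have h3 : (0:ℝ) < 2*x - 3 := by linarith
  have h21 : (0:ℝ) < x^2 - 1 := by nlinarith
  have hy : (0:ℝ) ≤ x - 4 := by linarith
  have hd : (0:ℝ) < 225*(2*x-3)^6*(x-2)^3*(x-1)*(x^2-1) :=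
    mul_pos (mul_pos (mul_pos (mul_pos (by norm_num) (pow_pos h3 6)) (pow_pos h2 3)) h1) h21
  have key : 2*(69/50)*(x/((x-1)*(x-2)) - (2/(2*x-3) + 2/(3*(2*x-3)^3) + 1/((2*x-3)^3*(x-2))))
      + ((2/(2*x-3))*((x^2+1)/(x^2-1) - 1)
        - (2/(2*x-3) + 2/(3*(2*x-3)^3) + 1/((2*x-3)^3*(x-2)))^2
        - (1/(x^2-1))*(x/((x-1)*(x-2)) - 2/(2*x-3)))
      = (731837250 + 2882765325*(x-4) + 5077648250*(x-4)^2 + 5264238850*(x-4)^3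
         + 3555548988*(x-4)^4 + 1633603258*(x-4)^5 + 516599978*(x-4)^6 + 110895384*(x-4)^7
         + 15440016*(x-4)^8 + 1256256*(x-4)^9 + 45216*(x-4)^10)
        / (225*(2*x-3)^6*(x-2)^3*(x-1)*(x^2-1)) := by
    field_simp
    ring
  rw [key]
  apply div_nonneg _ hd.le
  nlinarith [pow_nonneg hy 2, pow_nonneg hy 3, pow_nonneg hy 4, pow_nonneg hy 5,
    pow_nonneg hy 6, pow_nonneg hy 7, pow_nonneg hy 8, pow_nonneg hy 9, pow_nonneg hy 10]

lemma R4 {x : ℝ} (hx : 4 ≤ x) :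
    0 ≤ (x/((x-1)*(x-2)) - (2/(2*x-3) + 2/(3*(2*x-3)^3) + 1/((2*x-3)^3*(x-2))))*(69/50)^2
      + ((2/(2*x-3))*((x^2+1)/(x^2-1) - 1)
        - (2/(2*x-3) + 2/(3*(2*x-3)^3) + 1/((2*x-3)^3*(x-2)))^2
        - (1/(x^2-1))*(x/((x-1)*(x-2)) - 2/(2*x-3)))*(69/50)
      + ((1/x^2)*(2/(2*x-3)) - (2/(2*x-3) + 2/(3*(2*x-3)^3) + 1/((2*x-3)^3*(x-2)))^2) := by
  have h1 : (0:ℝ) < x - 1 := by linarith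
  have h2 : (0:ℝ) < x - 2 := by linarith
  have h3 : (0:ℝ) < 2*x - 3 := by linarith
  have h21 : (0:ℝ) < x^2 - 1 := by nlinarith
  have hx0 : (0:ℝ) < x := by linarith
  have hy : (0:ℝ) ≤ x - 4 := by linarith
  have hd : (0:ℝ) < 22500*(2*x-3)^6*(x-2)^3*(x-1)*(x^2-1)*x^2 :=
    mul_pos (mul_pos (mul_pos (mul_pos (mul_pos (by norm_num) (pow_pos h3 6)) (pow_pos h2 3)) h1)
      h21) (pow_pos hx0 2)
  have h3' : (x*2-3:ℝ) ≠ 0 := (by linarith : (0:ℝ) < x*2-3).ne'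
  have key : (x/((x-1)*(x-2)) - (2/(2*x-3) + 2/(3*(2*x-3)^3) + 1/((2*x-3)^3*(x-2))))*(69/50)^2
      + ((2/(2*x-3))*((x^2+1)/(x^2-1) - 1)
        - (2/(2*x-3) + 2/(3*(2*x-3)^3) + 1/((2*x-3)^3*(x-2)))^2
        - (1/(x^2-1))*(x/((x-1)*(x-2)) - 2/(2*x-3)))*(69/50)
      + ((1/x^2)*(2/(2*x-3)) - (2/(2*x-3) + 2/(3*(2*x-3)^3) + 1/((2*x-3)^3*(x-2)))^2)
      = (334842408000 + 1499561745600*(x-4) + 3038120474000*(x-4)^2 + 3680683740050*(x-4)^3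
         + 2967614262577*(x-4)^4 + 1675650601958*(x-4)^5 + 678304373425*(x-4)^6
         + 197866526594*(x-4)^7 + 41137898114*(x-4)^8 + 5914309752*(x-4)^9
         + 553640880*(x-4)^10 + 29892096*(x-4)^11 + 686304*(x-4)^12)
        / (22500*(2*x-3)^6*(x-2)^3*(x-1)*(x^2-1)*x^2) := by
    field_simp
    ring
  rw [key]
  apply div_nonneg _ hd.le
  nlinarith [pow_nonneg hy 2, pow_nonneg hy 3, pow_nonneg hy 4, pow_nonneg hy 5,
    pow_nonneg hy 6, pow_nonneg hy 7, pow_nonneg hy 8, pow_nonneg hy 9, pow_nonneg hy 10,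
    pow_nonneg hy 11, pow_nonneg hy 12]




lemma quad_cert (a s L A Ap S Sp c1 c2 : ℝ)
    (hA : A ≤ a) (hAp : a ≤ Ap) (hS : S ≤ s) (hSp : s ≤ Sp) (hL : 69/50 ≤ L)
    (hA0 : 0 < A) (hS0 : 0 < S) (hc1 : 1 ≤ c1) (hc2A : 0 ≤ c2 - A)
    (halpha : 0 ≤ c2 - Ap)
    (hmono : 0 ≤ 2*(69/50)*(c2 - Ap) + (A*(c1-1) - Ap^2 - Sp*(c2 - A)))
    (hval : 0 ≤ (c2 - Ap)*(69/50)^2 + (A*(c1-1) - Ap^2 - Sp*(c2 - A))*(69/50)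
              + (S*A - Ap^2)) :
    (L + 1) * a * (a + (L - s)) ≤ L * (c1 * a + (L - s) * c2) := by
  have hL0 : (0:ℝ) < L := by linarith
  have ha0 : 0 < a := lt_of_lt_of_le hA0 hA
  have hs0 : 0 < s := lt_of_lt_of_le hS0 hS
  have h1 : 0 ≤ (L - 69/50) * (2*(69/50)*(c2 - Ap) + (A*(c1-1) - Ap^2 - Sp*(c2 - A))) :=
    mul_nonneg (by linarith) hmono
  have h2 : 0 ≤ (c2 - Ap) * (L - 69/50)^2 := mul_nonneg halpha (sq_nonneg _)
  have h3 : 0 ≤ L^2 * (Ap - a) := mul_nonneg (sq_nonneg _) (by linarith)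
  have h4 : 0 ≤ L * ((a - A) * (c1 - 1)) :=
    mul_nonneg hL0.le (mul_nonneg (by linarith) (by linarith))
  have h5 : 0 ≤ L * ((Ap - a) * (Ap + a)) :=
    mul_nonneg hL0.le (mul_nonneg (by linarith) (by linarith))
  have h6 : 0 ≤ L * ((Sp - s) * (c2 - A)) :=
    mul_nonneg hL0.le (mul_nonneg (by linarith) hc2A)
  have h7 : 0 ≤ L * (s * (a - A)) :=
    mul_nonneg hL0.le (mul_nonneg hs0.le (by linarith))
  have h8 : 0 ≤ s * (a - A) := mul_nonneg hs0.le (by linarith)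
  have h9 : 0 ≤ A * (s - S) := mul_nonneg hA0.le (by linarith)
  have h10 : 0 ≤ (Ap - a) * (Ap + a) := mul_nonneg (by linarith) (by linarith)
  nlinarith [hval, h1, h2, h3, h4, h5, h6, h7, h8, h9, h10]

lemma a_bounds {x : ℝ} (hx : 4 ≤ x) :
    2/(2*x-3) ≤ Real.log (x-1) - Real.log (x-2) ∧
    Real.log (x-1) - Real.log (x-2)
      ≤ 2/(2*x-3) + 2/(3*(2*x-3)^3) + 1/((2*x-3)^3*(x-2)) := by
  have h3 : (0:ℝ) < 2*x-3 := by linarith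
  have h2 : (0:ℝ) < x - 2 := by linarith
  have h1 : (0:ℝ) < x - 1 := by linarith
  have h3' : (2*x-3 : ℝ) ≠ 0 := h3.ne'
  have h2' : (x-2 : ℝ) ≠ 0 := h2.ne'
  have h1' : (x-1 : ℝ) ≠ 0 := h1.ne'
  set v : ℝ := 1/(2*x-3) with hv
  clear_value v
  have hv0 : 0 < v := by rw [hv]; positivity
  have hv5 : v ≤ 1/5 := by
    rw [hv, div_le_div_iff₀ h3 (by norm_num)]
    linarith
  have hvabs : |v| < 1 := by rw [abs_of_pos hv0]; linarith
  have h1v : 0 < 1 - v := by linarith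
  have h1v' : 0 < 1 + v := by linarith
  have H1 := Real.abs_log_sub_add_sum_range_le hvabs 3
  have H2 := Real.abs_log_sub_add_sum_range_le (by rwa [abs_neg] : |(-v)| < 1) 3
  rw [abs_of_pos hv0] at H1
  rw [abs_neg, abs_of_pos hv0] at H2
  simp [Finset.sum_range_succ] at H1 H2
  rw [abs_le] at H1 H2
  have hsub : Real.log (1+v) - Real.log (1-v) = Real.log (x-1) - Real.log (x-2) := by
    rw [← Real.log_div h1v'.ne' h1v.ne', ← Real.log_div h1' h2']
    congr 1
    rw [div_eq_div_iff h1v.ne' h2', hv]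
    field_simp
    ring
  have hvv : 2*v^4/(1-v) ≤ 2*v^3/3 := by
    rw [div_le_iff₀ h1v]
    nlinarith [pow_pos hv0 3]
  have hvv' : 2*v^4/(1-v) = 2*(v^4/(1-v)) := by ring
  rw [hvv'] at hvv
  have low : 2*v ≤ Real.log (1+v) - Real.log (1-v) := by
    have l1 := H2.1
    have l2 := H1.2
    have c3 : ((-v):ℝ)^3 = -(v^3) := by ring
    rw [c3] at l1
    have n1 : ((1:ℝ)+1) = 2 := by norm_num
    have n2 : ((2:ℝ)+1) = 3 := by norm_num
    rw [n1, n2] at l1 l2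
    linarith [l1, l2, hvv]
  have high : Real.log (1+v) - Real.log (1-v) ≤ 2*v + 2*v^3/3 + 2*v^4/(1-v) := by
    have l1 := H2.2
    have l2 := H1.1
    have c3 : ((-v):ℝ)^3 = -(v^3) := by ring
    rw [c3] at l1
    have n1 : ((1:ℝ)+1) = 2 := by norm_num
    have n2 : ((2:ℝ)+1) = 3 := by norm_num
    rw [n1, n2] at l1 l2
    rw [hvv']
    linarith [l1, l2]
  have e1 : 2*v = 2/(2*x-3) := by rw [hv]; ring
  have e2 : 2*v^3/3 = 2/(3*(2*x-3)^3) := by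
    rw [hv, div_pow, one_pow]
    field_simp
  have e3 : 2*v^4/(1-v) = 1/((2*x-3)^3*(x-2)) := by
    rw [hv]
    have hm : 1 - 1/(2*x-3) = (2*x-4)/(2*x-3) := by
      field_simp
      ring
    have h4' : (2*x-4 : ℝ) ≠ 0 := by intro h; nlinarith
    rw [hm]
    field_simp
    ring
  constructor
  · rw [← hsub, ← e1]; exact low
  · rw [← hsub, ← e1, ← e2, ← e3]; exact high





lemma s_bounds {x : ℝ} (hx : 4 ≤ x) :
    1/x^2 ≤ 2*Real.log x - Real.log (x^2-1) ∧
    2*Real.log x - Real.log (x^2-1) ≤ 1/(x^2-1) := by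
  have hx0 : (0:ℝ) < x := by linarith
  have h21 : (0:ℝ) < x^2 - 1 := by nlinarith
  have hsq : 2*Real.log x = Real.log (x^2) := by
    rw [Real.log_pow]; push_cast; ring
  constructor
  · have h := Real.log_le_sub_one_of_pos (show (0:ℝ) < (x^2-1)/x^2 by positivity)
    rw [Real.log_div h21.ne' (by positivity)] at h
    have e : (x^2-1)/x^2 - 1 = -(1/x^2) := by field_simp; ring
    rw [e] at h
    rw [hsq]
    linarith
  · have h := Real.log_le_sub_one_of_pos (show (0:ℝ) < x^2/(x^2-1) by positivity)
    rw [Real.log_div (by positivity) h21.ne'] at h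
    have e : x^2/(x^2-1) - 1 = 1/(x^2-1) := by field_simp; ring
    rw [e] at h
    rw [hsq]
    linarith

lemma log_ge {x : ℝ} (hx : 4 ≤ x) : 69/50 ≤ Real.log x := by
  have h2 := Real.log_two_gt_d9
  have h4 : Real.log 4 = 2 * Real.log 2 := by
    rw [show (4:ℝ) = 2^2 by norm_num, Real.log_pow]; push_cast; ring
  have : Real.log 4 ≤ Real.log x := Real.log_le_log (by norm_num) hx
  linarith

lemma b_pos {x : ℝ} (hx : 4 ≤ x) :
    0 < Real.log (x^2-1) - Real.log x := by
  have hx0 : (0:ℝ) < x := by linarith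
  have : Real.log x < Real.log (x^2-1) := Real.log_lt_log hx0 (by nlinarith)
  linarith

lemma a_pos {x : ℝ} (hx : 4 ≤ x) :
    0 < Real.log (x-1) - Real.log (x-2) := by
  have : Real.log (x-2) < Real.log (x-1) := Real.log_lt_log (by linarith) (by linarith)
  linarith

lemma f_pos {x : ℝ} (hx : 4 ≤ x) : 0 < f x := by
  have ha := a_pos hx
  have hb := b_pos hx
  have : 0 < (Real.log (x ^ 2 - 1) - Real.log x) / (Real.log (x - 1) - Real.log (x - 2)) :=
    div_pos hb ha
  unfold f
  linarith

open Real Filter Set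

lemma key_deriv {x : ℝ} (hx : 4 ≤ x) :
    ∃ d, d ≤ 0 ∧ HasDerivAt (fun y => y * Real.log y / f y) d x := by
  have hx0 : (0:ℝ) < x := by linarith
  have h1 : (0:ℝ) < x - 1 := by linarith
  have h2 : (0:ℝ) < x - 2 := by linarith
  have h3 : (0:ℝ) < 2*x - 3 := by linarith
  have h21 : (0:ℝ) < x^2 - 1 := by nlinarith
  have ha := a_pos hx
  have hb := b_pos hx
  have hfpos := f_pos hx
  have hane : Real.log (x-1) - Real.log (x-2) ≠ 0 := ne_of_gt ha
  have hA : HasDerivAt (fun y : ℝ => Real.log (y-1) - Real.log (y-2))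
      (1/(x-1) - 1/(x-2)) x := by
    have d1 : HasDerivAt (fun y : ℝ => y - 1) 1 x := (hasDerivAt_id x).sub_const 1
    have d2 : HasDerivAt (fun y : ℝ => y - 2) 1 x := (hasDerivAt_id x).sub_const 2
    exact (d1.log h1.ne').sub (d2.log h2.ne')
  have hB : HasDerivAt (fun y : ℝ => Real.log (y^2-1) - Real.log y)
      (2*x/(x^2-1) - 1/x) x := by
    have d1 : HasDerivAt (fun y : ℝ => y^2 - 1) (2*x) x := by
      simpa using (hasDerivAt_pow 2 x).sub_const 1
    have l1 := d1.log h21.ne'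
    have l2 := Real.hasDerivAt_log hx0.ne'
    exact (l1.sub l2).congr_deriv (by rw [one_div])
  have hF : HasDerivAt f
      (((2*x/(x^2-1) - 1/x) * (Real.log (x-1) - Real.log (x-2))
        - (Real.log (x^2-1) - Real.log x) * (1/(x-1) - 1/(x-2)))
       / (Real.log (x-1) - Real.log (x-2))^2) x := by
    have hdiv := hB.div hA hane
    have hfe : f = fun y => 1 + (Real.log (y^2-1) - Real.log y)
        / (Real.log (y-1) - Real.log (y-2)) := rfl
    rw [hfe]
    exact hdiv.const_add 1
  have hU : HasDerivAt (fun y : ℝ => y * Real.log y) (Real.log x + 1) x := by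
    have h := (hasDerivAt_id x).mul (Real.hasDerivAt_log hx0.ne')
    exact h.congr_deriv (by simp [hx0.ne'])
  have hG := hU.div hF (ne_of_gt hfpos)
  refine ⟨_, ?_, hG⟩
  -- nonpositivity of the derivative
  have key := quad_cert (Real.log (x-1) - Real.log (x-2)) (2*Real.log x - Real.log (x^2-1))
      (Real.log x) (2/(2*x-3)) (2/(2*x-3) + 2/(3*(2*x-3)^3) + 1/((2*x-3)^3*(x-2)))
      (1/x^2) (1/(x^2-1)) ((x^2+1)/(x^2-1)) (x/((x-1)*(x-2)))
      (a_bounds hx).1 (a_bounds hx).2 (s_bounds hx).1 (s_bounds hx).2 (log_ge hx)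
      (div_pos two_pos h3) (by positivity)
      (by rw [le_div_iff₀ h21]; linarith)
      (R2 hx) (R1 hx) (R3 hx) (R4 hx)
  have heq : (Real.log x + 1) * f x - x * Real.log x *
        (((2*x/(x^2-1) - 1/x) * (Real.log (x-1) - Real.log (x-2))
          - (Real.log (x^2-1) - Real.log x) * (1/(x-1) - 1/(x-2)))
         / (Real.log (x-1) - Real.log (x-2))^2)
      = ((Real.log x + 1) * (Real.log (x-1) - Real.log (x-2))
            * ((Real.log (x-1) - Real.log (x-2)) + (Real.log (x^2-1) - Real.log x))
         - Real.log x * ((x^2+1)/(x^2-1) * (Real.log (x-1) - Real.log (x-2))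
            + (Real.log (x^2-1) - Real.log x) * (x/((x-1)*(x-2)))))
        / (Real.log (x-1) - Real.log (x-2))^2 := by
    simp only [f]
    field_simp
    ring
  have hnum : (Real.log x + 1) * (Real.log (x-1) - Real.log (x-2))
        * ((Real.log (x-1) - Real.log (x-2)) + (Real.log (x^2-1) - Real.log x))
      - Real.log x * ((x^2+1)/(x^2-1) * (Real.log (x-1) - Real.log (x-2))
        + (Real.log (x^2-1) - Real.log x) * (x/((x-1)*(x-2)))) ≤ 0 := by
    nlinarith [key]
  rw [heq, div_nonpos_iff]
  refine Or.inr ⟨?_, sq_nonneg _⟩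
  rw [div_nonpos_iff]
  exact Or.inr ⟨hnum, sq_nonneg _⟩

lemma tend_ratio (c : ℝ) : Tendsto (fun x : ℝ => x/(x-c)) atTop (nhds 1) := by
  have h0 : Tendsto (fun x : ℝ => c/(x-c)) atTop (nhds 0) :=
    Tendsto.div_atTop tendsto_const_nhds (tendsto_atTop_add_const_right _ (-c) tendsto_id)
  have h1 := h0.const_add 1
  rw [add_zero] at h1
  apply Filter.Tendsto.congr' _ h1
  filter_upwards [eventually_gt_atTop c] with x hxc
  have hne : x - c ≠ 0 := sub_ne_zero.mpr (ne_of_gt hxc)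
  field_simp
  ring

lemma a_crude {x : ℝ} (hx : 4 ≤ x) :
    1/(x-1) ≤ Real.log (x-1) - Real.log (x-2) ∧
    Real.log (x-1) - Real.log (x-2) ≤ 1/(x-2) := by
  have h1 : (0:ℝ) < x - 1 := by linarith
  have h2 : (0:ℝ) < x - 2 := by linarith
  have h3 : (0:ℝ) < 2*x - 3 := by linarith
  constructor
  · have hlow := (a_bounds hx).1
    have : 1/(x-1) ≤ 2/(2*x-3) := by
      rw [div_le_div_iff₀ h1 h3]
      linarith
    linarith
  · have h := Real.log_le_sub_one_of_pos (div_pos h1 h2)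
    rw [Real.log_div h1.ne' h2.ne'] at h
    have e : (x-1)/(x-2) - 1 = 1/(x-2) := by
      field_simp
      norm_num
    linarith

lemma tend_ax : Tendsto (fun x : ℝ => (Real.log (x-1) - Real.log (x-2)) * x)
    atTop (nhds 1) := by
  apply tendsto_of_tendsto_of_tendsto_of_le_of_le' (tend_ratio 1) (tend_ratio 2)
  · filter_upwards [eventually_ge_atTop (4:ℝ)] with x hx
    have h1 : (0:ℝ) < x - 1 := by linarith
    calc x/(x-1) = (1/(x-1)) * x := by ring
    _ ≤ (Real.log (x-1) - Real.log (x-2)) * x :=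
      mul_le_mul_of_nonneg_right (a_crude hx).1 (by linarith)
  · filter_upwards [eventually_ge_atTop (4:ℝ)] with x hx
    calc (Real.log (x-1) - Real.log (x-2)) * x ≤ (1/(x-2)) * x :=
      mul_le_mul_of_nonneg_right (a_crude hx).2 (by linarith)
    _ = x/(x-2) := by ring

lemma tend_s : Tendsto (fun x : ℝ => (2*Real.log x - Real.log (x^2-1))/Real.log x)
    atTop (nhds 0) := by
  have T0 : Tendsto (fun x : ℝ => 1/(x^2-1)) atTop (nhds 0) :=
    Tendsto.div_atTop tendsto_const_nhds
      (tendsto_atTop_add_const_right _ (-1) (tendsto_pow_atTop two_ne_zero))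
  apply tendsto_of_tendsto_of_tendsto_of_le_of_le' tendsto_const_nhds T0
  · filter_upwards [eventually_ge_atTop (4:ℝ)] with x hx
    have hL := log_ge hx
    have hx0 : (0:ℝ) < x := by linarith
    have hp : (0:ℝ) < 1/x^2 := by positivity
    exact div_nonneg (by linarith [(s_bounds hx).1]) (by linarith)
  · filter_upwards [eventually_ge_atTop (4:ℝ)] with x hx
    have hL := log_ge hx
    have hs0 : 0 ≤ 2*Real.log x - Real.log (x^2-1) := by
      have := (s_bounds hx).1
      have hx2 : (0:ℝ) < x^2 := by nlinarith
      have : (0:ℝ) < 1/x^2 := by positivity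
      linarith [(s_bounds hx).1]
    calc (2*Real.log x - Real.log (x^2-1))/Real.log x
        ≤ (2*Real.log x - Real.log (x^2-1)) := div_le_self hs0 (by linarith)
    _ ≤ 1/(x^2-1) := (s_bounds hx).2

lemma tend_f_ratio : Tendsto (fun x : ℝ => f x / (x * Real.log x)) atTop (nhds 1) := by
  have hxlog : Tendsto (fun x : ℝ => x * Real.log x) atTop atTop :=
    Tendsto.atTop_mul_atTop₀ tendsto_id Real.tendsto_log_atTop
  have T1 : Tendsto (fun x : ℝ => 1/(x * Real.log x)) atTop (nhds 0) :=
    Tendsto.div_atTop tendsto_const_nhds hxlog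
  have Tinv : Tendsto (fun x : ℝ => ((Real.log (x-1) - Real.log (x-2)) * x)⁻¹)
      atTop (nhds 1) := by
    have := tend_ax.inv₀ one_ne_zero
    rwa [inv_one] at this
  have Tprod : Tendsto (fun x : ℝ =>
      (1 - (2*Real.log x - Real.log (x^2-1))/Real.log x)
        * ((Real.log (x-1) - Real.log (x-2)) * x)⁻¹) atTop (nhds 1) := by
    have := ((tendsto_const_nhds : Tendsto (fun _ : ℝ => (1:ℝ)) atTop (nhds 1)).sub
      tend_s).mul Tinv
    simpa using this
  have Tsum := T1.add Tprod
  rw [zero_add] at Tsum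
  apply Filter.Tendsto.congr' _ Tsum
  filter_upwards [eventually_ge_atTop (4:ℝ)] with x hx
  have hx0 : (0:ℝ) < x := by linarith
  have h1 : (0:ℝ) < x - 1 := by linarith
  have h2 : (0:ℝ) < x - 2 := by linarith
  have h21 : (0:ℝ) < x^2 - 1 := by nlinarith
  have ha := a_pos hx
  have hL : (0:ℝ) < Real.log x := by linarith [log_ge hx]
  have hane : Real.log (x-1) - Real.log (x-2) ≠ 0 := ne_of_gt ha
  simp only [f]
  field_simp
  ring

theorem xlogx_div_f_antitone_tendsto :
    AntitoneOn (fun x => x * Real.log x / f x) (Set.Ici (4 : ℝ)) ∧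
      Filter.Tendsto (fun x => x * Real.log x / f x) Filter.atTop (nhds 1) := by
  constructor
  · apply antitoneOn_of_deriv_nonpos (convex_Ici 4)
    · intro x hx
      obtain ⟨d, _, hder⟩ := key_deriv hx
      exact hder.continuousAt.continuousWithinAt
    · rw [interior_Ici]
      intro x hx
      obtain ⟨d, _, hder⟩ := key_deriv (le_of_lt hx)
      exact hder.differentiableAt.differentiableWithinAt
    · rw [interior_Ici]
      intro x hx
      obtain ⟨d, hd, hder⟩ := key_deriv (le_of_lt hx)
      rw [hder.deriv]
      exact hd
  · have h := tend_f_ratio.inv₀ one_ne_zero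
    rw [inv_one] at h
    apply Filter.Tendsto.congr' _ h
    filter_upwards [eventually_ge_atTop (4:ℝ)] with x hx
    rw [inv_div]

end PaperStmt
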